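/- Let (G,u) be a totally ordered abelian group with strong unit u. The map υ : Γ(G,u)* → G defined by υ(m,a) = m • u + a is an isomorphism of ordered groups, with inverse x ↦ (n_x, x - n_x • u) where n_x is the unique integer with n_x • u ≤ x < (n_x + 1) • u. -/

import Mathlib

namespace ChangSeg

variable {G : Type*} [AddCommGroup G] [LinearOrder G] [IsOrderedAddMonoid G]

/-- The carrier of Chang's group on the segment `Γ(G,u)`: pairs `(m, a)` with
`a ∈ [0,u)` (i.e. `a ∈ Γ(G,u)`, `a ≠ u`). -/
def S (u : G) : Set (ℤ × G) := {p | 0 ≤ p.2 ∧ p.2 < u}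

/-- Chang's addition on `ℤ × Γ(G,u)`: `(m,a)+(n,b) = (m+n, a ⊕ b)` if
`a ⊕ b < 1` (i.e. `a + b < u`), and `(m+n+1, a ⊙ b)` if `a ⊕ b = 1`
(i.e. `u ≤ a + b`, in which case `a ⊙ b = a + b - u`). -/
noncomputable def add (u : G) (p q : ℤ × G) : ℤ × G :=
  if u ≤ p.2 + q.2 then (p.1 + q.1 + 1, p.2 + q.2 - u) else (p.1 + q.1, p.2 + q.2)

/-- The lexicographic order. -/
def lexLe (p q : ℤ × G) : Prop := p.1 < q.1 ∨ (p.1 = q.1 ∧ p.2 ≤ q.2)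

/-- The map `υ : Γ(G,u)* → G`, `υ(m,a) = m • u + a`. -/
def upsilon (u : G) (p : ℤ × G) : G := p.1 • u + p.2

end ChangSeg


private lemma ups_lt_ups {G : Type*} [AddCommGroup G] [LinearOrder G] [IsOrderedAddMonoid G] {u : G} (hu : 0 < u)
    {p q : ℤ × G} (hp : p ∈ ChangSeg.S u) (hq : q ∈ ChangSeg.S u) (h : p.1 < q.1) :
    ChangSeg.upsilon u p < ChangSeg.upsilon u q := by
  unfold ChangSeg.upsilon
  have h2 : (p.1 + 1) • u ≤ q.1 • u := zsmul_le_zsmul_left hu.le (by omega)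
  rw [add_zsmul, one_zsmul] at h2
  calc p.1 • u + p.2 < p.1 • u + u := add_lt_add_right hp.2 _
    _ ≤ q.1 • u := h2
    _ ≤ q.1 • u + q.2 := le_add_of_nonneg_right hq.1

private lemma upsilon_aux_floor {G : Type*} [AddCommGroup G] [LinearOrder G] [IsOrderedAddMonoid G]
    (u : G) (hu : 0 < u) (hsu : ∀ x : G, ∃ k : ℕ, x ≤ k • u) (x : G) :
    ∃ n : ℤ, n • u ≤ x ∧ x < (n + 1) • u := by
  obtain ⟨k, hk⟩ := hsu x
  obtain ⟨k', hk'⟩ := hsu (-x)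
  have hlow : (-(k' : ℤ)) • u ≤ x := by
    rw [neg_zsmul, natCast_zsmul]
    exact neg_le.mp hk'
  have hne : ∃ z : ℤ, x < z • u := by
    refine ⟨k + 1, lt_of_le_of_lt ?_ (zsmul_lt_zsmul_left hu (by omega : (k : ℤ) < k + 1))⟩
    rwa [natCast_zsmul]
  have hbdd : ∀ z : ℤ, x < z • u → -(k' : ℤ) ≤ z := by
    intro z hz
    by_contra hzb
    push_neg at hzb
    have := (zsmul_lt_zsmul_left hu hzb).trans_le hlow
    exact absurd hz (not_lt.mpr this.le)
  obtain ⟨m, hm, hmin⟩ := Int.exists_least_of_bdd ⟨-(k' : ℤ), fun z hz => hbdd z hz⟩ hne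
  refine ⟨m - 1, ?_, ?_⟩
  · by_contra hc
    push_neg at hc
    have := hmin (m - 1) hc
    omega
  · rwa [sub_add_cancel]

open ChangSeg in
/-- For a totally ordered abelian group with strong unit `(G,u)`, the map
`υ(m,a) = m • u + a` is an isomorphism of ordered groups from Chang's group
`Γ(G,u)*` onto `G`, with inverse `x ↦ (n_x, x - n_x • u)` where `n_x` is the
unique integer with `n_x • u ≤ x < (n_x + 1) • u`. -/
theorem upsilon_is_ordered_group_isomorphism {G : Type*} [AddCommGroup G] [LinearOrder G] [IsOrderedAddMonoid G]
    (u : G) (hu : 0 < u) (hsu : ∀ x : G, ∃ k : ℕ, x ≤ k • u) :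
    -- Chang's group is closed under addition
    (∀ p ∈ S u, ∀ q ∈ S u, add u p q ∈ S u) ∧
    -- υ is additive
    (∀ p ∈ S u, ∀ q ∈ S u, upsilon u (add u p q) = upsilon u p + upsilon u q) ∧
    -- υ is injective
    (∀ p ∈ S u, ∀ q ∈ S u, upsilon u p = upsilon u q → p = q) ∧
    -- υ is surjective, with the explicit inverse x ↦ (n_x, x - n_x • u)
    (∀ x : G, ∃! n : ℤ, n • u ≤ x ∧ x < (n + 1) • u) ∧
    (∀ x : G, ∀ n : ℤ, n • u ≤ x → x < (n + 1) • u →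
        ((n, x - n • u) ∈ S u ∧ upsilon u (n, x - n • u) = x)) ∧
    -- υ is an order isomorphism
    (∀ p ∈ S u, ∀ q ∈ S u, (lexLe p q ↔ upsilon u p ≤ upsilon u q)) := by
  have hclosed : ∀ p ∈ S u, ∀ q ∈ S u, add u p q ∈ S u := by
    intro p hp q hq
    unfold add
    split_ifs with h
    · refine ⟨sub_nonneg.mpr h, ?_⟩
      exact sub_lt_iff_lt_add.mpr (add_lt_add hp.2 hq.2)
    · push_neg at h
      exact ⟨add_nonneg hp.1 hq.1, h⟩
  have hadd : ∀ p ∈ S u, ∀ q ∈ S u, upsilon u (add u p q) = upsilon u p + upsilon u q := by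
    intro p hp q hq
    unfold add upsilon
    split_ifs with h
    · simp only [add_zsmul, one_zsmul]
      abel
    · simp only [add_zsmul]
      abel
  have hord : ∀ p ∈ S u, ∀ q ∈ S u, (lexLe p q ↔ upsilon u p ≤ upsilon u q) := by
    intro p hp q hq
    constructor
    · rintro (h | ⟨h1, h2⟩)
      · exact (ups_lt_ups hu hp hq h).le
      · unfold upsilon
        rw [h1]
        exact add_le_add_right h2 _
    · intro h
      by_contra hc
      unfold lexLe at hc
      push_neg at hc
      rcases lt_trichotomy p.1 q.1 with h1 | h1 | h1
      · have := hc.1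
        omega
      · have h2 := hc.2 h1
        unfold upsilon at h
        rw [h1] at h
        exact absurd (le_of_add_le_add_left h) (not_le.mpr h2)
      · exact absurd h (not_le.mpr (ups_lt_ups hu hq hp h1))
  refine ⟨hclosed, hadd, ?_, ?_, ?_, hord⟩
  · intro p hp q hq h
    have h1 : lexLe p q := (hord p hp q hq).mpr h.le
    have h2 : lexLe q p := (hord q hq p hp).mpr h.ge
    unfold lexLe at h1 h2
    have he : p.1 = q.1 := by omega
    have : p.2 = q.2 := by
      unfold upsilon at h
      rw [he] at h
      exact add_left_cancel h
    exact Prod.ext he this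
  · intro x
    obtain ⟨n, hn1, hn2⟩ := upsilon_aux_floor u hu hsu x
    refine ⟨n, ⟨hn1, hn2⟩, ?_⟩
    intro m ⟨hm1, hm2⟩
    by_contra hne
    rcases lt_or_gt_of_ne hne with h | h
    · have hle : (m + 1) • u ≤ n • u := zsmul_le_zsmul_left hu.le (by omega)
      exact absurd hm2 (not_lt.mpr (hle.trans hn1))
    · have hle : (n + 1) • u ≤ m • u := zsmul_le_zsmul_left hu.le (by omega)
      exact absurd hn2 (not_lt.mpr (hle.trans hm1))
  · intro x n hn1 hn2
    rw [add_zsmul, one_zsmul] at hn2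
    refine ⟨⟨sub_nonneg.mpr hn1, sub_lt_iff_lt_add'.mpr hn2⟩, ?_⟩
    unfold upsilon
    rw [add_comm, sub_add_cancel]
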